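/- In ℍ^n with the distance d∞(p,q) = ‖p⁻¹q‖, ‖(x,y,t)‖ = max{|(x,y)|, 2|t|^{1/2}}, let 𝕍, 𝕎 and the intrinsic Lipschitz condition be as above with constant α ≤ 1/2 and φ : 𝕎 → 𝕍 intrinsic Lipschitz with φ : gr_φ := {wφ(w) : w ∈ 𝕎}. Then for every p, q ∈ gr_φ one has |p_𝕍 − q_𝕍| ≤ 2α·d∞(p,q), where p = p_𝕎 p_𝕍 is the unique decomposition with p_𝕎 ∈ 𝕎, p_𝕍 ∈ 𝕍. -/

import Mathlib

/-- Points of the Heisenberg group `ℍ^n = ℝ^n × ℝ^n × ℝ` in exponential coordinates. -/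
abbrev HeisPt (n : ℕ) : Type _ := (Fin n → ℝ) × (Fin n → ℝ) × ℝ

/-- The Heisenberg group law
`(x,y,t)·(x',y',t') = (x+x', y+y', t+t'+½⟨x,y'⟩-½⟨x',y⟩)`. -/
noncomputable def heisMul {n : ℕ} (p q : HeisPt n) : HeisPt n :=
  (p.1 + q.1, p.2.1 + q.2.1,
    p.2.2 + q.2.2 + (∑ i : Fin n, p.1 i * q.2.1 i) / 2 - (∑ i : Fin n, q.1 i * p.2.1 i) / 2)

/-- The group inverse: `p⁻¹ = -p` in exponential coordinates. -/
noncomputable def heisInv {n : ℕ} (p : HeisPt n) : HeisPt n := (-p.1, -p.2.1, -p.2.2)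

/-- The homogeneous norm `‖(x,y,t)‖ = max {|(x,y)|, 2|t|^{1/2}}`. -/
noncomputable def heisNorm {n : ℕ} (p : HeisPt n) : ℝ :=
  max (Real.sqrt (∑ i : Fin n, p.1 i ^ 2 + ∑ i : Fin n, p.2.1 i ^ 2))
    (2 * Real.sqrt |p.2.2|)

/-- The vertical subgroup `𝕎 = {x₁ = ⋯ = x_k = 0}`. -/
def heisW (n k : ℕ) : Set (HeisPt n) := {p | ∀ i : Fin n, (i : ℕ) < k → p.1 i = 0}

/-- The horizontal subgroup `𝕍 = {(x, 0, 0) : x_{k+1} = ⋯ = x_n = 0} ≅ ℝ^k`. -/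
def heisV (n k : ℕ) : Set (HeisPt n) :=
  {p | (∀ i : Fin n, k ≤ (i : ℕ) → p.1 i = 0) ∧ p.2.1 = 0 ∧ p.2.2 = 0}

/-- The Euclidean distance of the `𝕍`-components `p_𝕍, q_𝕍 ∈ 𝕍 ≅ ℝ^k` of two points:
`|p_𝕍 - q_𝕍| = (∑_{i < k} (pᵢ - qᵢ)²)^{1/2}`. -/
noncomputable def heisVdist {n : ℕ} (k : ℕ) (p q : HeisPt n) : ℝ :=
  Real.sqrt (∑ i : Fin n, if (i : ℕ) < k then (p.1 i - q.1 i) ^ 2 else 0)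

lemma heisNorm_nonneg {n : ℕ} (p : HeisPt n) : 0 ≤ heisNorm p :=
  le_trans (by positivity) (le_max_right _ _)

lemma heisNorm_inv {n : ℕ} (p : HeisPt n) : heisNorm (heisInv p) = heisNorm p := by
  simp [heisNorm, heisInv]

/-- `q⁻¹ r = (q⁻¹ p)(p⁻¹ r)`. -/
lemma heis_factor {n : ℕ} (p q r : HeisPt n) :
    heisMul (heisInv q) r = heisMul (heisMul (heisInv q) p) (heisMul (heisInv p) r) := by
  simp only [heisMul, heisInv, Prod.mk.injEq]
  refine ⟨by ext i; simp, by ext i; simp, ?_⟩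
  simp only [Pi.add_apply, Pi.neg_apply, add_mul, mul_add, neg_mul, mul_neg,
    Finset.sum_add_distrib, Finset.sum_neg_distrib]
  ring

/-- `(ab)⁻¹(ac) = b⁻¹c`. -/
lemma heis_cancel {n : ℕ} (a b c : HeisPt n) :
    heisMul (heisInv (heisMul a b)) (heisMul a c) = heisMul (heisInv b) c := by
  simp only [heisMul, heisInv, Prod.mk.injEq]
  refine ⟨by ext i; simp, by ext i; simp, ?_⟩
  simp only [Pi.add_apply, Pi.neg_apply, add_mul, mul_add, neg_mul, mul_neg,
    Finset.sum_add_distrib, Finset.sum_neg_distrib]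
  ring

/-- `(p⁻¹ q)⁻¹ = q⁻¹ p`. -/
lemma heis_inv_mul {n : ℕ} (p q : HeisPt n) :
    heisInv (heisMul (heisInv p) q) = heisMul (heisInv q) p := by
  simp only [heisMul, heisInv, Prod.mk.injEq]
  refine ⟨by ext i; simp, by ext i; simp, ?_⟩
  simp only [Pi.neg_apply, neg_mul, mul_neg, Finset.sum_neg_distrib]
  ring

/-- Triangle inequality in the special case where the right factor is horizontal. -/
lemma heisNorm_mul_horiz {n : ℕ} (g v : HeisPt n) (h1 : v.2.1 = 0) (h2 : v.2.2 = 0) :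
    heisNorm (heisMul g v) ≤ heisNorm g + Real.sqrt (∑ i : Fin n, v.1 i ^ 2) := by
  set A := Real.sqrt (∑ i : Fin n, v.1 i ^ 2) with hAdef
  set N := heisNorm g with hNdef
  have hA : 0 ≤ A := Real.sqrt_nonneg _
  have hN : 0 ≤ N := heisNorm_nonneg g
  have hA2 : A ^ 2 = ∑ i : Fin n, v.1 i ^ 2 := Real.sq_sqrt (by positivity)
  have hS : Real.sqrt (∑ i : Fin n, g.1 i ^ 2 + ∑ i : Fin n, g.2.1 i ^ 2) ≤ N :=
    le_max_left _ _
  have hT : 2 * Real.sqrt |g.2.2| ≤ N := le_max_right _ _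
  have hS2 : ∑ i : Fin n, g.1 i ^ 2 + ∑ i : Fin n, g.2.1 i ^ 2 ≤ N ^ 2 := by
    have := pow_le_pow_left₀ (Real.sqrt_nonneg _) hS 2
    rwa [Real.sq_sqrt (by positivity)] at this
  have hT2 : |g.2.2| ≤ N ^ 2 / 4 := by
    have h1 : Real.sqrt |g.2.2| ≤ N / 2 := by linarith
    have := pow_le_pow_left₀ (Real.sqrt_nonneg _) h1 2
    rw [Real.sq_sqrt (abs_nonneg _)] at this
    nlinarith
  have hg1 : Real.sqrt (∑ i : Fin n, g.1 i ^ 2) ≤ N := by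
    refine le_trans (Real.sqrt_le_sqrt ?_) hS
    exact le_add_of_nonneg_right (by positivity)
  have hg2 : Real.sqrt (∑ i : Fin n, g.2.1 i ^ 2) ≤ N := by
    refine le_trans (Real.sqrt_le_sqrt ?_) hS
    exact le_add_of_nonneg_left (by positivity)
  have cs1 : ∑ i : Fin n, g.1 i * v.1 i ≤ N * A := by
    refine le_trans (Real.sum_mul_le_sqrt_mul_sqrt _ _ _) ?_
    exact mul_le_mul_of_nonneg_right hg1 hA
  have cs2 : |∑ i : Fin n, v.1 i * g.2.1 i| ≤ A * N := by
    rw [abs_le]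
    constructor
    · have h3 : Real.sqrt (∑ i : Fin n, (-v.1 i) ^ 2) = A := by
        rw [hAdef]; congr 1; exact Finset.sum_congr rfl fun i _ => by ring
      have h4 : ∑ i : Fin n, (-v.1 i) * g.2.1 i ≤ A * N := by
        refine le_trans (Real.sum_mul_le_sqrt_mul_sqrt _ _ _) ?_
        rw [h3]
        exact mul_le_mul_of_nonneg_left hg2 hA
      rw [neg_le, ← Finset.sum_neg_distrib]
      simpa only [neg_mul] using h4
    · refine le_trans (Real.sum_mul_le_sqrt_mul_sqrt _ _ _) ?_
      exact mul_le_mul_of_nonneg_left hg2 hA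
  rw [heisNorm]
  apply max_le
  · -- horizontal part
    have harg : ∑ i : Fin n, (heisMul g v).1 i ^ 2 + ∑ i : Fin n, (heisMul g v).2.1 i ^ 2
        ≤ (N + A) ^ 2 := by
      simp only [heisMul, h1, Pi.add_apply, Pi.zero_apply, add_zero]
      have expand : ∑ i : Fin n, (g.1 i + v.1 i) ^ 2 =
          ∑ i : Fin n, g.1 i ^ 2 + 2 * ∑ i : Fin n, g.1 i * v.1 i + ∑ i : Fin n, v.1 i ^ 2 := by
        simp only [add_sq, mul_assoc]
        rw [Finset.sum_add_distrib, Finset.sum_add_distrib, ← Finset.mul_sum]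
      rw [expand]
      nlinarith [cs1, hS2, hA2]
    calc Real.sqrt (∑ i : Fin n, (heisMul g v).1 i ^ 2 + ∑ i : Fin n, (heisMul g v).2.1 i ^ 2)
        ≤ Real.sqrt ((N + A) ^ 2) := Real.sqrt_le_sqrt harg
      _ = N + A := Real.sqrt_sq (by linarith)
  · -- vertical part
    have harg : |(heisMul g v).2.2| ≤ ((N + A) / 2) ^ 2 := by
      simp only [heisMul, h1, h2, Pi.zero_apply, mul_zero, Finset.sum_const_zero, add_zero,
        zero_div]
      calc |g.2.2 - (∑ i : Fin n, v.1 i * g.2.1 i) / 2|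
          ≤ |g.2.2| + |∑ i : Fin n, v.1 i * g.2.1 i| / 2 := by
            refine le_trans (abs_sub _ _) ?_
            rw [abs_div, abs_two]
        _ ≤ N ^ 2 / 4 + A * N / 2 := by linarith
        _ ≤ ((N + A) / 2) ^ 2 := by nlinarith
    calc 2 * Real.sqrt |(heisMul g v).2.2| ≤ 2 * Real.sqrt (((N + A) / 2) ^ 2) := by
          have := Real.sqrt_le_sqrt harg
          linarith
      _ = N + A := by rw [Real.sqrt_sq (by linarith)]; ring

/-- Let `φ : 𝕎 → 𝕍 ≅ ℝ^k` be intrinsic Lipschitz with constant `α ≤ 1/2`,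
i.e. `|φ(w) - φ(w')| ≤ α ‖(w' φ(w'))⁻¹ w φ(w')‖` for all `w, w' ∈ 𝕎`.  Then for every pair of
points `p, q` on the intrinsic graph `gr_φ = {w φ(w) : w ∈ 𝕎}` one has
`|p_𝕍 - q_𝕍| ≤ 2 α d∞(p, q)`, where `d∞(p, q) = ‖p⁻¹ q‖`. -/
theorem graph_horizontal_projection_estimate
    (n k : ℕ) (hk₁ : 1 ≤ k) (hk₂ : k ≤ n) (α : ℝ) (hα : 0 < α) (hα₂ : α ≤ 1 / 2)
    (φ : HeisPt n → HeisPt n)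
    (hφV : ∀ w ∈ heisW n k, φ w ∈ heisV n k)
    (hcone : ∀ w ∈ heisW n k, ∀ w' ∈ heisW n k,
      Real.sqrt (∑ i : Fin n, ((φ w).1 i - (φ w').1 i) ^ 2) ≤
        α * heisNorm (heisMul (heisInv (heisMul w' (φ w'))) (heisMul w (φ w')))) :
    ∀ p q : HeisPt n,
      (∃ w ∈ heisW n k, p = heisMul w (φ w)) →
      (∃ w ∈ heisW n k, q = heisMul w (φ w)) →
      heisVdist k p q ≤ 2 * α * heisNorm (heisMul (heisInv p) q) := by
  rintro p q ⟨w, hw, hp⟩ ⟨w', hw', hq⟩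
  obtain ⟨hV1, hV2, hV3⟩ := hφV w hw
  obtain ⟨hV1', hV2', hV3'⟩ := hφV w' hw'
  set D := Real.sqrt (∑ i : Fin n, ((φ w).1 i - (φ w').1 i) ^ 2) with hD
  set Nd := heisNorm (heisMul (heisInv p) q) with hNd
  have hD0 : 0 ≤ D := Real.sqrt_nonneg _
  have hNd0 : 0 ≤ Nd := heisNorm_nonneg _
  have stepA : heisVdist k p q = D := by
    rw [heisVdist, hD]
    congr 1
    refine Finset.sum_congr rfl fun i _ => ?_
    by_cases hik : (i : ℕ) < k
    · simp [hik, hp, hq, heisMul, hw i hik, hw' i hik]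
    · simp [hik, hV1 i (le_of_not_gt hik), hV1' i (le_of_not_gt hik)]
  have hco := hcone w hw w' hw'
  rw [← hq, heis_factor p q (heisMul w (φ w')), hp, heis_cancel] at hco
  -- now hco : D ≤ α * heisNorm (heisMul X V) with
  -- X = heisMul (heisInv q) (heisMul w (φ w)), V = heisMul (heisInv (φ w)) (φ w')
  set V : HeisPt n := heisMul (heisInv (φ w)) (φ w') with hVdef
  have hV21 : V.2.1 = 0 := by
    simp [hVdef, heisMul, heisInv, hV2, hV2']
  have hV22 : V.2.2 = 0 := by
    simp [hVdef, heisMul, heisInv, hV2, hV2', hV3, hV3']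
  have hVD : Real.sqrt (∑ i : Fin n, V.1 i ^ 2) = D := by
    rw [hD]
    congr 1
    refine Finset.sum_congr rfl fun i _ => ?_
    simp only [hVdef, heisMul, heisInv, Pi.add_apply, Pi.neg_apply]
    ring
  have hX : heisNorm (heisMul (heisInv q) (heisMul w (φ w))) = Nd := by
    rw [← hp, ← heis_inv_mul p q, heisNorm_inv, hNd]
  have tri := heisNorm_mul_horiz (heisMul (heisInv q) (heisMul w (φ w))) V hV21 hV22
  rw [hVD, hX] at tri
  have hco2 : D ≤ α * (Nd + D) := by
    refine le_trans hco ?_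
    exact mul_le_mul_of_nonneg_left tri (le_of_lt hα)
  rw [stepA]
  nlinarith
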